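/- arXiv:0801.3921 — 7 statements merged into one kernel-verified Lean document; each statement's English description precedes it below -/
import Mathlib

section
/- Let G be a group, K a set, and ∂₀ : K → G a map. Let E(∂₀) be the presented group on the generating set G × K subject to the relations (X,m)·(Y,n)·(X,m)⁻¹ = (X·∂₀(m)·X⁻¹·Y, n) for all X, Y ∈ G and m, n ∈ K, and write ⟦X,m⟧ for the class of the generator (X,m). Then: (i) there is a unique group homomorphism ∂ : E(∂₀) → G with ∂⟦X,m⟧ = X·∂₀(m)·X⁻¹ for all X ∈ G, m ∈ K; (ii) there is a unique left action ▷ of G on E(∂₀) by group automorphisms with X ▷ ⟦Y,m⟧ = ⟦X·Y, m⟧ for all X, Y ∈ G, m ∈ K; (iii) with these data, (G, E(∂₀), ∂, ▷) satisfies the crossed module axioms. -/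
/-- The defining relations of the principal group of the free crossed module on a map
`d0 : K → G`: for all `X Y : G` and `m n : K`,
`(X,m) * (Y,n) * (X,m)⁻¹ = (X * d0 m * X⁻¹ * Y, n)`. -/
def crossedRels {G K : Type*} [Group G] (d0 : K → G) : Set (FreeGroup (G × K)) :=
  {r | ∃ (X Y : G) (m n : K),
    r = FreeGroup.of (X, m) * FreeGroup.of (Y, n) * (FreeGroup.of (X, m))⁻¹ *
        (FreeGroup.of (X * d0 m * X⁻¹ * Y, n))⁻¹}

/-- The principal group `E(d0)` of the free crossed module on `d0 : K → G`: the presented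
group on the generating set `G × K` subject to the relations `crossedRels d0`. -/
abbrev FreeCMGroup {G K : Type*} [Group G] (d0 : K → G) : Type _ :=
  PresentedGroup (crossedRels d0)

/-- The class `⟦X, m⟧` of the generator `(X, m)` in `E(d0)`. -/
def cmGen {G K : Type*} [Group G] (d0 : K → G) (X : G) (m : K) : FreeCMGroup d0 :=
  PresentedGroup.of (X, m)

/-- The key relation holding in `E(d0)`. -/
lemma cmGen_rel {G K : Type*} [Group G] (d0 : K → G) (X Y : G) (m n : K) :
    cmGen d0 X m * cmGen d0 Y n * (cmGen d0 X m)⁻¹ = cmGen d0 (X * d0 m * X⁻¹ * Y) n := by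
  have h : (PresentedGroup.mk (crossedRels d0))
      (FreeGroup.of (X, m) * FreeGroup.of (Y, n) * (FreeGroup.of (X, m))⁻¹ *
        (FreeGroup.of (X * d0 m * X⁻¹ * Y, n))⁻¹) = 1 := by
    apply (QuotientGroup.eq_one_iff _).2
    exact Subgroup.subset_normalClosure ⟨X, Y, m, n, rfl⟩
  simp only [map_mul, map_inv] at h
  have := mul_eq_one_iff_eq_inv.mp h
  simpa [cmGen, PresentedGroup.of] using this

/-- The boundary homomorphism. -/
def cmDelta {G K : Type*} [Group G] (d0 : K → G) : FreeCMGroup d0 →* G :=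
  PresentedGroup.toGroup (f := fun p : G × K => p.1 * d0 p.2 * p.1⁻¹) (by
    rintro r ⟨X, Y, m, n, rfl⟩
    simp only [map_mul, map_inv, FreeGroup.lift_apply_of]
    group)

lemma cmDelta_gen {G K : Type*} [Group G] (d0 : K → G) (X : G) (m : K) :
    cmDelta d0 (cmGen d0 X m) = X * d0 m * X⁻¹ :=
  PresentedGroup.toGroup.of _

/-- The action of a single element as an endomorphism. -/
def cmActHom {G K : Type*} [Group G] (d0 : K → G) (X : G) :
    FreeCMGroup d0 →* FreeCMGroup d0 :=
  PresentedGroup.toGroup (f := fun p : G × K => cmGen d0 (X * p.1) p.2) (by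
    rintro r ⟨X', Y', m, n, rfl⟩
    simp only [map_mul, map_inv, FreeGroup.lift_apply_of]
    rw [mul_inv_eq_one, cmGen_rel]
    congr 1
    group)

lemma cmActHom_gen {G K : Type*} [Group G] (d0 : K → G) (X Y : G) (m : K) :
    cmActHom d0 X (cmGen d0 Y m) = cmGen d0 (X * Y) m :=
  PresentedGroup.toGroup.of _

lemma cmActHom_comp {G K : Type*} [Group G] (d0 : K → G) (X Y : G) :
    (cmActHom d0 X).comp (cmActHom d0 Y) = cmActHom d0 (X * Y) := by
  apply PresentedGroup.ext
  rintro ⟨Z, m⟩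
  show cmActHom d0 X (cmActHom d0 Y (cmGen d0 Z m)) = cmActHom d0 (X * Y) (cmGen d0 Z m)
  rw [cmActHom_gen, cmActHom_gen, cmActHom_gen, mul_assoc]

lemma cmActHom_one {G K : Type*} [Group G] (d0 : K → G) :
    cmActHom d0 (1 : G) = MonoidHom.id _ := by
  apply PresentedGroup.ext
  rintro ⟨Z, m⟩
  show cmActHom d0 1 (cmGen d0 Z m) = cmGen d0 Z m
  rw [cmActHom_gen, one_mul]

/-- The action as a homomorphism into `MulAut`. -/
def cmRho {G K : Type*} [Group G] (d0 : K → G) : G →* MulAut (FreeCMGroup d0) where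
  toFun X :=
    { toFun := cmActHom d0 X
      invFun := cmActHom d0 X⁻¹
      left_inv := fun e => by
        rw [← MonoidHom.comp_apply, cmActHom_comp, inv_mul_cancel, cmActHom_one]; rfl
      right_inv := fun e => by
        rw [← MonoidHom.comp_apply, cmActHom_comp, mul_inv_cancel, cmActHom_one]; rfl
      map_mul' := map_mul _ }
  map_one' := by
    ext e
    show cmActHom d0 1 e = e
    rw [cmActHom_one]; rfl
  map_mul' X Y := by
    ext e
    show cmActHom d0 (X * Y) e = cmActHom d0 X (cmActHom d0 Y e)
    rw [← cmActHom_comp]; rfl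

lemma cmRho_gen {G K : Type*} [Group G] (d0 : K → G) (X Y : G) (m : K) :
    cmRho d0 X (cmGen d0 Y m) = cmGen d0 (X * Y) m :=
  cmActHom_gen d0 X Y m

/-- Let `G` be a group, `K` a set, `d0 : K → G` a map, and `E(d0)` the
presented group above.  Then: (i) there is a unique group homomorphism `δ : E(d0) →* G` with
`δ ⟦X,m⟧ = X * d0 m * X⁻¹`; (ii) there is a unique left action of `G` on `E(d0)` by group
automorphisms (i.e. a unique homomorphism `ρ : G →* MulAut (E(d0))`) with
`ρ X ⟦Y,m⟧ = ⟦X*Y, m⟧`; (iii) with these data, `(G, E(d0), δ, ρ)` satisfies the crossed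
module axioms. -/
theorem freeCrossedModule_exists {G K : Type*} [Group G] (d0 : K → G) :
    (∃! δ : FreeCMGroup d0 →* G,
        ∀ (X : G) (m : K), δ (cmGen d0 X m) = X * d0 m * X⁻¹) ∧
    (∃! ρ : G →* MulAut (FreeCMGroup d0),
        ∀ (X Y : G) (m : K), ρ X (cmGen d0 Y m) = cmGen d0 (X * Y) m) ∧
    (∀ (δ : FreeCMGroup d0 →* G) (ρ : G →* MulAut (FreeCMGroup d0)),
      (∀ (X : G) (m : K), δ (cmGen d0 X m) = X * d0 m * X⁻¹) →
      (∀ (X Y : G) (m : K), ρ X (cmGen d0 Y m) = cmGen d0 (X * Y) m) →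
      (∀ (X : G) (e : FreeCMGroup d0), δ (ρ X e) = X * δ e * X⁻¹) ∧
      (∀ e f : FreeCMGroup d0, ρ (δ e) f = e * f * e⁻¹)) := by
  refine ⟨⟨cmDelta d0, cmDelta_gen d0, ?_⟩, ⟨cmRho d0, cmRho_gen d0, ?_⟩, ?_⟩
  · intro δ hδ
    apply PresentedGroup.ext
    rintro ⟨X, m⟩
    rw [show (PresentedGroup.of (X, m) : FreeCMGroup d0) = cmGen d0 X m from rfl,
      hδ, cmDelta_gen]
  · intro ρ hρ
    ext X : 1
    apply MulEquiv.toMonoidHom_injective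
    apply PresentedGroup.ext
    rintro ⟨Y, m⟩
    show ρ X (cmGen d0 Y m) = cmRho d0 X (cmGen d0 Y m)
    rw [hρ, cmRho_gen]
  · intro δ ρ hδ hρ
    constructor
    · intro X e
      have h : δ.comp (ρ X).toMonoidHom = (MulAut.conj X).toMonoidHom.comp δ := by
        apply PresentedGroup.ext
        rintro ⟨Y, m⟩
        show δ (ρ X (cmGen d0 Y m)) = X * δ (cmGen d0 Y m) * X⁻¹
        rw [hρ, hδ, hδ]
        group
      exact DFunLike.congr_fun h e
    · intro e f
      have h : (ρ.comp δ) = (MulAut.conj : FreeCMGroup d0 →* MulAut (FreeCMGroup d0)) := by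
        apply PresentedGroup.ext
        rintro ⟨X, m⟩
        apply MulEquiv.toMonoidHom_injective
        apply PresentedGroup.ext
        rintro ⟨Y, n⟩
        show ρ (δ (cmGen d0 X m)) (cmGen d0 Y n) =
          cmGen d0 X m * cmGen d0 Y n * (cmGen d0 X m)⁻¹
        rw [hδ, hρ, cmGen_rel]
      have h2 := DFunLike.congr_fun h e
      calc ρ (δ e) f = MulAut.conj e f := by rw [← h2]; rfl
        _ = e * f * e⁻¹ := rfl
end

section
/- Let G be a group, K a set, and ∂₀ : K → G a map, and let E(∂₀) be the principal group of the free crossed module on ∂₀. Then the map ι : K → E(∂₀) defined by ι(m) = ⟦1,m⟧ is injective. -/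
/-- Let `G` be a group, `K` a set, `d0 : K → G` a map, and `E(d0)` the
principal group of the free crossed module on `d0`.  Then the map `ι : K → E(d0)`,
`ι m = ⟦1, m⟧`, is injective. -/
theorem freeCrossedModule_gen_injective {G K : Type*} [Group G] (d0 : K → G) :
    Function.Injective (fun m : K => cmGen d0 1 m) := by
  classical
  -- map each generator (X, m) to the basis element m of the free abelian group on K
  set f : G × K → Multiplicative (K →₀ ℤ) :=
    fun p => Multiplicative.ofAdd (Finsupp.single p.2 1) with hf
  have hrel : ∀ r ∈ crossedRels d0, FreeGroup.lift f r = 1 := by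
    rintro r ⟨X, Y, m, n, rfl⟩
    simp only [map_mul, map_inv, FreeGroup.lift_apply_of, hf]
    rw [show ∀ a b : Multiplicative (K →₀ ℤ), a * b * a⁻¹ * b⁻¹ = 1 from fun a b => by
      rw [mul_comm a b]; group]
  let φ : FreeCMGroup d0 →* Multiplicative (K →₀ ℤ) := PresentedGroup.toGroup hrel
  intro m n h
  have : φ (cmGen d0 1 m) = φ (cmGen d0 1 n) := by rw [show cmGen d0 1 m = cmGen d0 1 n from h]
  have h2 : (Finsupp.single m 1 : K →₀ ℤ) = Finsupp.single n 1 := by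
    simpa [φ, cmGen, PresentedGroup.toGroup.of, hf] using this
  by_contra hne
  have := Finsupp.single_eq_single_iff m n (1 : ℤ) 1 |>.mp h2
  simp [hne] at this
end

section
/- Let (G, E(∂₀), ∂, ▷) be the free crossed module on a map ∂₀ : K → G. Let (G', E', ∂', ▷') be a crossed module, φ : G → G' a group homomorphism, and ψ₀ : K → E' a map such that ∂'(ψ₀(m)) = φ(∂₀(m)) for all m ∈ K. Then there exists a unique group homomorphism ψ : E(∂₀) → E' with ψ⟦1,m⟧ = ψ₀(m) for all m ∈ K such that (φ, ψ) is a morphism of crossed modules, i.e. ∂' ∘ ψ = φ ∘ ∂ and ψ(X ▷ e) = φ(X) ▷' ψ(e) for all X ∈ G, e ∈ E(∂₀). -/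
/-- universal property of the free crossed module.  Let `(G, E(d0), δ, ρ)`
be the free crossed module on `d0 : K → G` (so `δ ⟦X,m⟧ = X * d0 m * X⁻¹` and
`ρ X ⟦Y,m⟧ = ⟦X*Y,m⟧`).  Let `(G', E', δ', ρ')` be a crossed module, `φ : G →* G'` a group
homomorphism and `ψ0 : K → E'` a map with `δ' (ψ0 m) = φ (d0 m)` for all `m`.  Then there is
a unique group homomorphism `ψ : E(d0) →* E'` with `ψ ⟦1,m⟧ = ψ0 m` such that `(φ, ψ)` is a
morphism of crossed modules, i.e. `δ' ∘ ψ = φ ∘ δ` and `ψ (ρ X e) = ρ' (φ X) (ψ e)`. -/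
theorem freeCrossedModule_universalProperty {G K G' E' : Type*}
    [Group G] [Group G'] [Group E'] (d0 : K → G)
    (δ : FreeCMGroup d0 →* G) (ρ : G →* MulAut (FreeCMGroup d0))
    (hδ : ∀ (X : G) (m : K), δ (cmGen d0 X m) = X * d0 m * X⁻¹)
    (hρ : ∀ (X Y : G) (m : K), ρ X (cmGen d0 Y m) = cmGen d0 (X * Y) m)
    (δ' : E' →* G') (ρ' : G' →* MulAut E')
    (hCM1' : ∀ (x : G') (e : E'), δ' (ρ' x e) = x * δ' e * x⁻¹)
    (hCM2' : ∀ e f : E', ρ' (δ' e) f = e * f * e⁻¹)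
    (φ : G →* G') (ψ0 : K → E')
    (hψ0 : ∀ m : K, δ' (ψ0 m) = φ (d0 m)) :
    ∃! ψ : FreeCMGroup d0 →* E',
      (∀ m : K, ψ (cmGen d0 1 m) = ψ0 m) ∧
      δ'.comp ψ = φ.comp δ ∧
      (∀ (X : G) (e : FreeCMGroup d0), ψ (ρ X e) = ρ' (φ X) (ψ e)) := by
  set f : G × K → E' := fun p => ρ' (φ p.1) (ψ0 p.2) with hf
  have key : ∀ X Y : G, ∀ m n : K,
      f (X, m) * f (Y, n) * (f (X, m))⁻¹ = f (X * d0 m * X⁻¹ * Y, n) := by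
    intro X Y m n
    have h1 : δ' (f (X, m)) = φ (X * d0 m * X⁻¹) := by
      simp [hf, hCM1', hψ0, map_mul, map_inv]
    calc f (X, m) * f (Y, n) * (f (X, m))⁻¹ = ρ' (δ' (f (X, m))) (f (Y, n)) :=
          (hCM2' _ _).symm
      _ = f (X * d0 m * X⁻¹ * Y, n) := by
          rw [h1]; simp [hf, map_mul]
  have hrel : ∀ r ∈ crossedRels d0, FreeGroup.lift f r = 1 := by
    rintro r ⟨X, Y, m, n, rfl⟩
    simp only [map_mul, map_inv, FreeGroup.lift_apply_of]
    rw [key X Y m n]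
    group
  have hof : ∀ (X : G) (m : K),
      PresentedGroup.toGroup hrel (cmGen d0 X m) = ρ' (φ X) (ψ0 m) :=
    fun X m => PresentedGroup.toGroup.of hrel
  refine ⟨PresentedGroup.toGroup hrel, ⟨?_, ?_, ?_⟩, ?_⟩
  · intro m
    rw [hof]; simp
  · ext ⟨X, m⟩
    show δ' (PresentedGroup.toGroup hrel (cmGen d0 X m)) = φ (δ (cmGen d0 X m))
    rw [hof, hδ, hCM1', hψ0]
    simp [map_mul, map_inv]
  · intro X e
    have : (PresentedGroup.toGroup hrel).comp (ρ X).toMonoidHom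
        = ((ρ' (φ X)).toMonoidHom.comp (PresentedGroup.toGroup hrel)) := by
      ext ⟨Y, m⟩
      show PresentedGroup.toGroup hrel (ρ X (cmGen d0 Y m))
        = ρ' (φ X) (PresentedGroup.toGroup hrel (cmGen d0 Y m))
      rw [hρ, hof, hof, map_mul, map_mul, MulAut.mul_apply]
    exact DFunLike.congr_fun this e
  · intro ψ ⟨h1, h2, h3⟩
    ext ⟨X, m⟩
    show ψ (cmGen d0 X m) = PresentedGroup.toGroup hrel (cmGen d0 X m)
    have hXm : cmGen d0 X m = ρ X (cmGen d0 1 m) := by rw [hρ, mul_one]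
    rw [hXm, h3, h1, ← hXm, hof]
end

section
/- Let (G, E(∂₀), ∂, ▷) be the free crossed module on a map ∂₀ : K → G. Then the range of ∂ equals the normal closure in G of the set {∂₀(m) : m ∈ K}. -/
/-- Let `(G, E(d0), δ, ρ)` be the free crossed module on `d0 : K → G`.
Then the range of the boundary homomorphism `δ` equals the normal closure in `G` of the set
`{d0 m : m ∈ K}`. -/
theorem freeCrossedModule_range_boundary {G K : Type*} [Group G] (d0 : K → G)
    (δ : FreeCMGroup d0 →* G)
    (hδ : ∀ (X : G) (m : K), δ (cmGen d0 X m) = X * d0 m * X⁻¹) :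
    δ.range = Subgroup.normalClosure (Set.range d0) := by
  have key : δ '' (Set.range (PresentedGroup.of : G × K → FreeCMGroup d0)) =
      Group.conjugatesOfSet (Set.range d0) := by
    ext x
    constructor
    · rintro ⟨-, ⟨⟨X, m⟩, rfl⟩, rfl⟩
      exact Group.mem_conjugatesOfSet_iff.2 ⟨d0 m, ⟨m, rfl⟩, isConj_iff.2 ⟨X, (hδ X m).symm⟩⟩
    · intro hx
      obtain ⟨b, ⟨m, rfl⟩, hc⟩ := Group.mem_conjugatesOfSet_iff.1 hx
      obtain ⟨c, rfl⟩ := isConj_iff.1 hc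
      exact ⟨PresentedGroup.of (c, m), ⟨(c, m), rfl⟩, hδ c m⟩
  rw [Subgroup.normalClosure, ← key, ← MonoidHom.map_closure,
    PresentedGroup.closure_range_of, ← MonoidHom.range_eq_map]
end

section
/- Let L be a set and G = FreeGroup(L). Let K be a set, ∂₀ : K → G a map, and (G, E(∂₀), ∂, ▷) the free crossed module on ∂₀. Let r₁, …, rₙ ∈ E(∂₀) satisfy ∂(rᵢ) = 1 for each i, let F be the subgroup of E(∂₀) generated by {X ▷ rᵢ : X ∈ G, 1 ≤ i ≤ n}, and let U = E(∂₀)⧸F with induced boundary ∂̄ : U → G and induced G-action ▷̄ (the presented crossed module 𝒰(∂₀; r₁, …, rₙ)). Let (G', E', ∂', ▷') be a crossed module. Then the assignment sending a crossed module morphism (φ, ψ̄) : (G, U, ∂̄, ▷̄) → (G', E', ∂', ▷') to the pair of maps (l ↦ φ(FreeGroup.of l) : L → G', m ↦ ψ̄(⟦1,m⟧F) : K → E') is a bijection onto the set of pairs (φ₀ : L → G', ψ₀ : K → E') such that, with φ : G → G' the group homomorphism extending φ₀ and ψ : E(∂₀) → E' the group homomorphism given by the universal property of the free crossed module (so ψ⟦1,m⟧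 = ψ₀(m)), one has ∂'(ψ₀(m)) = φ(∂₀(m)) for all m ∈ K and ψ(rᵢ) = 1 for all i = 1, …, n. -/
/-- Let `L` be a set and `G = FreeGroup L`, let `d0 : K → G`, and let
`(G, E(d0), δ, ρ)` be the free crossed module on `d0`.  Let `r 1, …, r n ∈ E(d0)` be
2-relations (`δ (r i) = 1`), let `F` be the subgroup of `E(d0)` generated by
`{ρ X (r i)}` (which equals the normal closure of that set — the first conjunct below), and
let `U = E(d0) ⧸ F` with induced boundary `δb` and induced `G`-action `ρb` (the presented
crossed module `𝒰(d0; r 1, …, r n)`).  Let `(G', E', δ', ρ')` be a crossed module.  Then the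
assignment sending a crossed module morphism `(φ, ψb) : (G, U) → (G', E')` to the pair of
maps `(l ↦ φ (of l), m ↦ ψb ⟦⟦1,m⟧⟧)` is a bijection onto the set of pairs
`(φ0 : L → G', ψ0 : K → E')` such that, with `φ = FreeGroup.lift φ0` and `ψ : E(d0) →* E'`
the homomorphism given by the universal property of the free crossed module
(`ψ ⟦1,m⟧ = ψ0 m`, `δ' ∘ ψ = φ ∘ δ`, `ψ (ρ X e) = ρ' (φ X) (ψ e)`), one has
`δ' (ψ0 m) = φ (d0 m)` for all `m` and `ψ (r i) = 1` for all `i`. -/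
theorem presentedCrossedModule_morphism_bijection {L K G' E' : Type*}
    [Group G'] [Group E'] (d0 : K → FreeGroup L)
    (δ : FreeCMGroup d0 →* FreeGroup L) (ρ : FreeGroup L →* MulAut (FreeCMGroup d0))
    (hδ : ∀ (X : FreeGroup L) (m : K), δ (cmGen d0 X m) = X * d0 m * X⁻¹)
    (hρ : ∀ (X Y : FreeGroup L) (m : K), ρ X (cmGen d0 Y m) = cmGen d0 (X * Y) m)
    (hCM1 : ∀ (X : FreeGroup L) (e : FreeCMGroup d0), δ (ρ X e) = X * δ e * X⁻¹)
    (hCM2 : ∀ e f : FreeCMGroup d0, ρ (δ e) f = e * f * e⁻¹)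
    (n : ℕ) (r : Fin n → FreeCMGroup d0) (hr : ∀ i, δ (r i) = 1)
    (δb : (FreeCMGroup d0 ⧸ Subgroup.normalClosure
        {x | ∃ (X : FreeGroup L) (i : Fin n), x = ρ X (r i)}) →* FreeGroup L)
    (hδb : ∀ e : FreeCMGroup d0, δb (QuotientGroup.mk e) = δ e)
    (ρb : FreeGroup L →* MulAut (FreeCMGroup d0 ⧸ Subgroup.normalClosure
        {x | ∃ (X : FreeGroup L) (i : Fin n), x = ρ X (r i)}))
    (hρb : ∀ (X : FreeGroup L) (e : FreeCMGroup d0),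
      ρb X (QuotientGroup.mk e) = QuotientGroup.mk (ρ X e))
    (δ' : E' →* G') (ρ' : G' →* MulAut E')
    (hCM1' : ∀ (x : G') (e : E'), δ' (ρ' x e) = x * δ' e * x⁻¹)
    (hCM2' : ∀ e f : E', ρ' (δ' e) f = e * f * e⁻¹) :
    Subgroup.closure {x | ∃ (X : FreeGroup L) (i : Fin n), x = ρ X (r i)} =
      Subgroup.normalClosure {x | ∃ (X : FreeGroup L) (i : Fin n), x = ρ X (r i)} ∧
    Set.BijOn
      (fun p : (FreeGroup L →* G') × ((FreeCMGroup d0 ⧸ Subgroup.normalClosure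
            {x | ∃ (X : FreeGroup L) (i : Fin n), x = ρ X (r i)}) →* E') =>
        ((fun l => p.1 (FreeGroup.of l), fun m => p.2 (QuotientGroup.mk (cmGen d0 1 m))) :
          (L → G') × (K → E')))
      {p | δ'.comp p.2 = p.1.comp δb ∧ ∀ X u, p.2 (ρb X u) = ρ' (p.1 X) (p.2 u)}
      {q | (∀ m : K, δ' (q.2 m) = FreeGroup.lift q.1 (d0 m)) ∧
           ∀ ψ : FreeCMGroup d0 →* E',
             (∀ m : K, ψ (cmGen d0 1 m) = q.2 m) →
             δ'.comp ψ = (FreeGroup.lift q.1).comp δ →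
             (∀ (X : FreeGroup L) (e : FreeCMGroup d0),
               ψ (ρ X e) = ρ' (FreeGroup.lift q.1 X) (ψ e)) →
             ∀ i, ψ (r i) = 1} := by
  classical
  have hρS : ∀ (X : FreeGroup L) (x : FreeCMGroup d0),
      x ∈ {x | ∃ (X : FreeGroup L) (i : Fin n), x = ρ X (r i)} →
      ρ X x ∈ {x | ∃ (X : FreeGroup L) (i : Fin n), x = ρ X (r i)} := by
    rintro X x ⟨Y, i, rfl⟩
    exact ⟨X * Y, i, by rw [map_mul]; rfl⟩
  have hmap : ∀ (X : FreeGroup L),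
      ∀ x ∈ Subgroup.closure {x | ∃ (X : FreeGroup L) (i : Fin n), x = ρ X (r i)},
      ρ X x ∈ Subgroup.closure {x | ∃ (X : FreeGroup L) (i : Fin n), x = ρ X (r i)} := by
    intro X x hx
    have hle : Subgroup.map (ρ X).toMonoidHom
        (Subgroup.closure {x | ∃ (X : FreeGroup L) (i : Fin n), x = ρ X (r i)})
        ≤ Subgroup.closure {x | ∃ (X : FreeGroup L) (i : Fin n), x = ρ X (r i)} := by
      rw [MonoidHom.map_closure]
      apply (Subgroup.closure_le _).mpr
      rintro _ ⟨y, hy, rfl⟩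
      exact Subgroup.subset_closure (hρS X y hy)
    exact hle ⟨x, hx, rfl⟩
  have hnormal : (Subgroup.closure
      {x | ∃ (X : FreeGroup L) (i : Fin n), x = ρ X (r i)}).Normal := by
    constructor
    intro g hg h
    have heq : h * g * h⁻¹ = ρ (δ h) g := (hCM2 h g).symm
    rw [heq]
    exact hmap _ _ hg
  haveI := hnormal
  have hcl : Subgroup.closure {x | ∃ (X : FreeGroup L) (i : Fin n), x = ρ X (r i)} =
      Subgroup.normalClosure {x | ∃ (X : FreeGroup L) (i : Fin n), x = ρ X (r i)} := by
    refine le_antisymm ((Subgroup.closure_le _).mpr Subgroup.subset_normalClosure) ?_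
    exact Subgroup.normalClosure_le_normal Subgroup.subset_closure
  have hmkr : ∀ i : Fin n, (QuotientGroup.mk (r i) :
      FreeCMGroup d0 ⧸ Subgroup.normalClosure
        {x | ∃ (X : FreeGroup L) (i : Fin n), x = ρ X (r i)}) = 1 := by
    intro i
    rw [QuotientGroup.eq_one_iff]
    exact Subgroup.subset_normalClosure ⟨1, i, by rw [map_one]; rfl⟩
  refine ⟨hcl, ?_, ?_, ?_⟩
  · -- MapsTo
    rintro ⟨φ, ψb⟩ ⟨hcomm, hequiv⟩
    dsimp only at hcomm hequiv ⊢
    have hliftφ : FreeGroup.lift (fun l => φ (FreeGroup.of l)) = φ :=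
      FreeGroup.ext_hom _ _ fun a => by simp
    constructor
    · intro m
      have h1 := DFunLike.congr_fun hcomm (QuotientGroup.mk (cmGen d0 1 m))
      simp only [MonoidHom.comp_apply] at h1
      rw [hliftφ, h1, hδb, hδ]
      simp
    · intro ψ hg1 hg2 hg3 i
      rw [hliftφ] at hg2 hg3
      have hext : ψ = ψb.comp (QuotientGroup.mk' (Subgroup.normalClosure
          {x | ∃ (X : FreeGroup L) (i : Fin n), x = ρ X (r i)})) := by
        apply PresentedGroup.ext
        rintro ⟨X, m⟩
        show ψ (cmGen d0 X m) = ψb (QuotientGroup.mk (cmGen d0 X m))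
        have h1 : cmGen d0 X m = ρ X (cmGen d0 1 m) := by rw [hρ, mul_one]
        rw [h1, hg3, hg1, ← hequiv, hρb]
      rw [hext]
      show ψb (QuotientGroup.mk (r i)) = 1
      rw [hmkr i, map_one]
  · -- InjOn
    rintro ⟨φ, ψb⟩ ⟨hcomm, hequiv⟩ ⟨φ', ψb'⟩ ⟨hcomm', hequiv'⟩ heq
    dsimp only at hcomm hequiv hcomm' hequiv' heq
    have h1 : (fun l => φ (FreeGroup.of l)) = fun l => φ' (FreeGroup.of l) :=
      congrArg Prod.fst heq
    have h2 : (fun m => ψb (QuotientGroup.mk (cmGen d0 1 m)))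
        = fun m => ψb' (QuotientGroup.mk (cmGen d0 1 m)) := congrArg Prod.snd heq
    have hφ : φ = φ' := FreeGroup.ext_hom _ _ fun a => congrFun h1 a
    have hψ : ψb = ψb' := by
      apply QuotientGroup.monoidHom_ext
      apply PresentedGroup.ext
      rintro ⟨X, m⟩
      show ψb (QuotientGroup.mk (cmGen d0 X m)) = ψb' (QuotientGroup.mk (cmGen d0 X m))
      have hgen : cmGen d0 X m = ρ X (cmGen d0 1 m) := by rw [hρ, mul_one]
      rw [hgen, ← hρb, hequiv, hequiv', congrFun h2 m, hφ]
    rw [Prod.ext_iff]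
    exact ⟨hφ, hψ⟩
  · -- SurjOn
    rintro ⟨φ0, ψ0⟩ ⟨h1, h2⟩
    dsimp only at h1 h2
    have hρ'mul : ∀ (a b : G') (x : E'), ρ' (a * b) x = ρ' a (ρ' b x) := by
      intro a b x; rw [map_mul, MulAut.mul_apply]
    have hρ'one : ∀ x : E', ρ' (1 : G') x = x := by
      intro x; rw [map_one, MulAut.one_apply]
    have hrel : ∀ rel ∈ crossedRels d0,
        FreeGroup.lift
          (fun p : FreeGroup L × K => ρ' (FreeGroup.lift φ0 p.1) (ψ0 p.2)) rel = 1 := by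
      rintro _ ⟨X, Y, m, m', rfl⟩
      simp only [map_mul, map_inv, FreeGroup.lift_apply_of]
      rw [mul_inv_eq_one]
      calc ρ' (FreeGroup.lift φ0 X) (ψ0 m) * ρ' (FreeGroup.lift φ0 Y) (ψ0 m') *
            (ρ' (FreeGroup.lift φ0 X) (ψ0 m))⁻¹
          = ρ' (δ' (ρ' (FreeGroup.lift φ0 X) (ψ0 m)))
              (ρ' (FreeGroup.lift φ0 Y) (ψ0 m')) := (hCM2' _ _).symm
        _ = ρ' (FreeGroup.lift φ0 X * δ' (ψ0 m) * (FreeGroup.lift φ0 X)⁻¹)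
              (ρ' (FreeGroup.lift φ0 Y) (ψ0 m')) := by rw [hCM1']
        _ = ρ' (FreeGroup.lift φ0 (X * d0 m * X⁻¹))
              (ρ' (FreeGroup.lift φ0 Y) (ψ0 m')) := by
              rw [h1 m, ← map_inv, ← map_mul, ← map_mul]
        _ = ρ' (FreeGroup.lift φ0 (X * d0 m * X⁻¹) * FreeGroup.lift φ0 Y) (ψ0 m') :=
              (hρ'mul _ _ _).symm
        _ = (ρ' (FreeGroup.lift φ0 X) * ρ' (FreeGroup.lift φ0 (d0 m)) *
              (ρ' (FreeGroup.lift φ0 X))⁻¹ * ρ' (FreeGroup.lift φ0 Y)) (ψ0 m') := by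
              simp only [map_mul, map_inv]
    let ψ : FreeCMGroup d0 →* E' := PresentedGroup.toGroup hrel
    have hψgen : ∀ (X : FreeGroup L) (m : K),
        ψ (cmGen d0 X m) = ρ' (FreeGroup.lift φ0 X) (ψ0 m) :=
      fun X m => PresentedGroup.toGroup.of hrel
    have hψ1 : ∀ m, ψ (cmGen d0 1 m) = ψ0 m := by
      intro m; rw [hψgen, map_one, hρ'one]
    have hδψ : δ'.comp ψ = (FreeGroup.lift φ0).comp δ := by
      apply PresentedGroup.ext
      rintro ⟨X, m⟩
      show δ' (ψ (cmGen d0 X m)) = FreeGroup.lift φ0 (δ (cmGen d0 X m))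
      rw [hψgen, hCM1', h1 m, hδ]
      simp [map_mul, map_inv]
    have hψequiv : ∀ (X : FreeGroup L) (e : FreeCMGroup d0),
        ψ (ρ X e) = ρ' (FreeGroup.lift φ0 X) (ψ e) := by
      intro X e
      have hh : ψ.comp (ρ X).toMonoidHom
          = (ρ' (FreeGroup.lift φ0 X)).toMonoidHom.comp ψ := by
        apply PresentedGroup.ext
        rintro ⟨Y, m⟩
        show ψ (ρ X (cmGen d0 Y m)) = ρ' (FreeGroup.lift φ0 X) (ψ (cmGen d0 Y m))
        rw [hρ, hψgen, hψgen, map_mul (FreeGroup.lift φ0) X Y, hρ'mul]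
      exact DFunLike.congr_fun hh e
    have hker : Subgroup.normalClosure
        {x | ∃ (X : FreeGroup L) (i : Fin n), x = ρ X (r i)} ≤ ψ.ker := by
      apply Subgroup.normalClosure_le_normal
      rintro _ ⟨X, i, rfl⟩
      rw [SetLike.mem_coe, MonoidHom.mem_ker, hψequiv, h2 ψ hψ1 hδψ hψequiv i, map_one]
    refine ⟨⟨FreeGroup.lift φ0, QuotientGroup.lift _ ψ hker⟩, ⟨?_, ?_⟩, ?_⟩
    · apply QuotientGroup.monoidHom_ext
      refine MonoidHom.ext fun e => ?_
      show δ' (ψ e) = FreeGroup.lift φ0 (δb (QuotientGroup.mk e))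
      rw [hδb]
      exact DFunLike.congr_fun hδψ e
    · intro X u
      induction u using QuotientGroup.induction_on with
      | H e =>
        show QuotientGroup.lift _ ψ hker (ρb X (QuotientGroup.mk e)) = _
        rw [hρb]
        show ψ (ρ X e) = ρ' (FreeGroup.lift φ0 X) (ψ e)
        exact hψequiv X e
    · rw [Prod.ext_iff]
      constructor
      · funext l
        exact FreeGroup.lift_apply_of
      · funext m
        exact hψ1 m
end

section
/- Let G be a group, K₁ and K₂ sets, K = K₁ ⊕ K₂ their disjoint union, and ∂₀ : K → G a map with ∂₀(m) = 1 for every m ∈ K₂. Let (G, E, ∂, ▷) be the free crossed module on ∂₀, and for i = 1, 2 let F_i be the subgroup of E generated by the set {X ▷ ⟦1,m⟧ : X ∈ G, m ∈ K_i}. Then F₂ is contained in the center of E, both F₁ and F₂ are invariant under the action of G, F₁ ∩ F₂ = {1}, and F₁·F₂ = E; that is, E is the internal direct product of F₁ and F₂, compatibly with the G-action. -/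
section Aux

variable {G K1 K2 : Type*} [Group G] (d0 : K1 ⊕ K2 → G)

/-- The normal closure of the image of `d0` in `G`. -/
abbrev cmN : Subgroup G := Subgroup.normalClosure (Set.range d0)

/-- Weight function sending `(X, m)` to the basis element `([X], m)` if `m ∈ K2`, and to `1`
otherwise. -/
noncomputable def cmWeight (p : G × (K1 ⊕ K2)) : Multiplicative ((G ⧸ cmN d0) × K2 →₀ ℤ) :=
  match p with
  | (_, Sum.inl _) => 1
  | (X, Sum.inr n) => Multiplicative.ofAdd (Finsupp.single ((QuotientGroup.mk X : G ⧸ cmN d0), n) 1)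

lemma cm_mk_eq_mk (Y : G) (m : K1 ⊕ K2) (X : G) :
    (QuotientGroup.mk Y : G ⧸ cmN d0) = QuotientGroup.mk (X * d0 m * X⁻¹ * Y) := by
  rw [QuotientGroup.eq]
  have hm : d0 m ∈ cmN d0 := Subgroup.subset_normalClosure ⟨m, rfl⟩
  have hcm := Subgroup.normalClosure_normal.conj_mem _ hm (Y⁻¹ * X)
  have e : (Y⁻¹ * X) * d0 m * (Y⁻¹ * X)⁻¹ = Y⁻¹ * (X * d0 m * X⁻¹ * Y) := by group
  rwa [e] at hcm

lemma cmWeight_rels : ∀ r ∈ crossedRels d0, FreeGroup.lift (cmWeight d0) r = 1 := by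
  rintro r ⟨X, Y, m, n, rfl⟩
  simp only [map_mul, map_inv, FreeGroup.lift_apply_of]
  have key : cmWeight d0 (Y, n) = cmWeight d0 (X * d0 m * X⁻¹ * Y, n) := by
    cases n with
    | inl _ => rfl
    | inr k =>
      show Multiplicative.ofAdd (Finsupp.single ((QuotientGroup.mk Y : G ⧸ cmN d0), k) 1) = _
      rw [cm_mk_eq_mk d0 Y m X]
      rfl
  rw [← key, mul_comm (cmWeight d0 (X, m)) (cmWeight d0 (Y, n)), mul_inv_cancel_right,
    mul_inv_cancel]

/-- The abelianization-type homomorphism killing the `K1`-generators and remembering the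
`K2`-generators. -/
noncomputable def cmPhi : FreeCMGroup d0 →* Multiplicative ((G ⧸ cmN d0) × K2 →₀ ℤ) :=
  PresentedGroup.toGroup (cmWeight_rels d0)

lemma cmPhi_gen (X : G) (m : K1 ⊕ K2) : cmPhi d0 (cmGen d0 X m) = cmWeight d0 (X, m) :=
  PresentedGroup.toGroup.of _

end Aux

/-- Let `G` be a group, `K = K₁ ⊕ K₂` a disjoint union, and `d0 : K → G` a
map with `d0 m = 1` for every `m ∈ K₂`.  Let `(G, E, δ, ρ)` be the free crossed module on
`d0`, and for `i = 1, 2` let `Fᵢ` be the subgroup of `E` generated by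
`{ρ X ⟦1,m⟧ : X ∈ G, m ∈ Kᵢ}`.  Then `F₂` is contained in the center of `E`, both `F₁` and
`F₂` are invariant under the `G`-action, `F₁ ∩ F₂ = {1}` and `F₁·F₂ = E`; that is, `E` is
the internal direct product of `F₁` and `F₂`, compatibly with the `G`-action. -/
theorem freeCrossedModule_internal_product {G K1 K2 : Type*} [Group G]
    (d0 : K1 ⊕ K2 → G) (h2 : ∀ m : K2, d0 (Sum.inr m) = 1)
    (δ : FreeCMGroup d0 →* G) (ρ : G →* MulAut (FreeCMGroup d0))
    (hδ : ∀ (X : G) (m : K1 ⊕ K2), δ (cmGen d0 X m) = X * d0 m * X⁻¹)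
    (hρ : ∀ (X Y : G) (m : K1 ⊕ K2), ρ X (cmGen d0 Y m) = cmGen d0 (X * Y) m)
    (hCM1 : ∀ (X : G) (e : FreeCMGroup d0), δ (ρ X e) = X * δ e * X⁻¹)
    (hCM2 : ∀ e f : FreeCMGroup d0, ρ (δ e) f = e * f * e⁻¹)
    (F1 F2 : Subgroup (FreeCMGroup d0))
    (hF1 : F1 = Subgroup.closure {x | ∃ (X : G) (m : K1), x = ρ X (cmGen d0 1 (Sum.inl m))})
    (hF2 : F2 = Subgroup.closure {x | ∃ (X : G) (m : K2), x = ρ X (cmGen d0 1 (Sum.inr m))}) :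
    F2 ≤ Subgroup.center (FreeCMGroup d0) ∧
    (∀ (X : G), ∀ f ∈ F1, ρ X f ∈ F1) ∧
    (∀ (X : G), ∀ f ∈ F2, ρ X f ∈ F2) ∧
    F1 ⊓ F2 = ⊥ ∧
    (∀ e : FreeCMGroup d0, ∃ f1 ∈ F1, ∃ f2 ∈ F2, e = f1 * f2) := by
  -- basic facts
  have hgen : ∀ (X : G) (m : K1 ⊕ K2), ρ X (cmGen d0 1 m) = cmGen d0 X m := by
    intro X m; rw [hρ, mul_one]
  have hrel : ∀ (X : G) (m : K1 ⊕ K2) (Y : G) (n : K1 ⊕ K2),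
      cmGen d0 X m * cmGen d0 Y n * (cmGen d0 X m)⁻¹ = cmGen d0 (X * d0 m * X⁻¹ * Y) n := by
    intro X m Y n
    rw [← hCM2, hδ, hρ]
  have hc : ∀ (X : G) (n : K2) (f : FreeCMGroup d0),
      cmGen d0 X (Sum.inr n) * f = f * cmGen d0 X (Sum.inr n) := by
    intro X n f
    have h := hCM2 (cmGen d0 X (Sum.inr n)) f
    rw [hδ, h2, mul_one, mul_inv_cancel, map_one, MulAut.one_apply] at h
    rw [eq_mul_inv_iff_mul_eq] at h
    exact h.symm
  have hcen : ∀ (X : G) (n : K2), cmGen d0 X (Sum.inr n) ∈ Subgroup.center (FreeCMGroup d0) :=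
    fun X n => Subgroup.mem_center_iff.mpr fun g => (hc X n g).symm
  -- (1) F2 is central
  have hcenter : F2 ≤ Subgroup.center (FreeCMGroup d0) := by
    rw [hF2]
    refine (Subgroup.closure_le _).mpr ?_
    rintro x ⟨X, n, rfl⟩
    rw [hgen]
    exact hcen X n
  -- (2),(3) invariance
  have hinvGen : ∀ (S : Set (FreeCMGroup d0)), (∀ X : G, ∀ x ∈ S, ρ X x ∈ S) →
      ∀ X : G, ∀ f ∈ Subgroup.closure S, ρ X f ∈ Subgroup.closure S := by
    intro S hS X f hf
    induction hf using Subgroup.closure_induction with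
    | mem x hx => exact Subgroup.subset_closure (hS X x hx)
    | one => rw [map_one]; exact Subgroup.one_mem _
    | mul x y _ _ ihx ihy => rw [map_mul]; exact Subgroup.mul_mem _ ihx ihy
    | inv x _ ihx => rw [map_inv]; exact Subgroup.inv_mem _ ihx
  have hinv1 : ∀ (X : G), ∀ f ∈ F1, ρ X f ∈ F1 := by
    rw [hF1]
    refine hinvGen _ ?_
    rintro X' x ⟨Y, m, rfl⟩
    exact ⟨X' * Y, m, by rw [hgen, hρ, hgen]⟩
  have hinv2 : ∀ (X : G), ∀ f ∈ F2, ρ X f ∈ F2 := by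
    rw [hF2]
    refine hinvGen _ ?_
    rintro X' x ⟨Y, n, rfl⟩
    exact ⟨X' * Y, n, by rw [hgen, hρ, hgen]⟩
  -- membership of generators
  have hm1 : ∀ (X : G) (m : K1), cmGen d0 X (Sum.inl m) ∈ F1 := by
    intro X m; rw [hF1]; exact Subgroup.subset_closure ⟨X, m, (hgen X _).symm⟩
  have hm2 : ∀ (X : G) (n : K2), cmGen d0 X (Sum.inr n) ∈ F2 := by
    intro X n; rw [hF2]; exact Subgroup.subset_closure ⟨X, n, (hgen X _).symm⟩
  -- independence of the K2 generators along cmN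
  have hind : ∀ (n : K2) (g : G), g ∈ cmN d0 → ∀ Y : G,
      cmGen d0 (g * Y) (Sum.inr n) = cmGen d0 Y (Sum.inr n) := by
    intro n g hg
    have hg' : g ∈ Subgroup.closure (Group.conjugatesOfSet (Set.range d0)) := hg
    clear hg
    induction hg' using Subgroup.closure_induction with
    | mem x hx =>
      intro Y
      obtain ⟨a, ⟨m, rfl⟩, hconj⟩ := Group.mem_conjugatesOfSet_iff.mp hx
      obtain ⟨c, hc'⟩ := hconj
      have hx' : x = (c : G) * d0 m * (c : G)⁻¹ := eq_mul_inv_iff_mul_eq.mpr hc'.symm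
      rw [hx', ← hrel (c : G) m Y (Sum.inr n), ← hc Y n (cmGen d0 (c : G) m),
        mul_inv_cancel_right]
    | one => intro Y; rw [one_mul]
    | mul x y _ _ ihx ihy => intro Y; rw [mul_assoc, ihx, ihy]
    | inv x _ ihx =>
      intro Y
      have h := ihx (x⁻¹ * Y)
      rw [← mul_assoc, mul_inv_cancel, one_mul] at h
      exact h.symm
  have hs : ∀ (X Y : G) (n : K2), X⁻¹ * Y ∈ cmN d0 →
      cmGen d0 X (Sum.inr n) = cmGen d0 Y (Sum.inr n) := by
    intro X Y n h
    have h1 : X * (X⁻¹ * Y) * X⁻¹ ∈ cmN d0 := Subgroup.normalClosure_normal.conj_mem _ h X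
    have h2' := hind n _ h1 X
    have e : X * (X⁻¹ * Y) * X⁻¹ * X = Y := by group
    rw [e] at h2'
    exact h2'.symm
  -- the section into the center
  let s' : (G ⧸ cmN d0) × K2 → Subgroup.center (FreeCMGroup d0) := fun p =>
    Quotient.liftOn' p.1 (fun X => ⟨cmGen d0 X (Sum.inr p.2), hcen X p.2⟩)
      (fun X Y h => Subtype.ext (hs X Y p.2 (QuotientGroup.leftRel_apply.mp h)))
  have hs'mk : ∀ (X : G) (n : K2),
      (s' (QuotientGroup.mk X, n) : FreeCMGroup d0) = cmGen d0 X (Sum.inr n) := fun X n => rfl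
  open scoped IsMulCommutative in
  let Ψ : ((G ⧸ cmN d0) × K2 →₀ ℤ) →+ Additive (Subgroup.center (FreeCMGroup d0)) :=
    Finsupp.liftAddHom fun p => zmultiplesHom _ (Additive.ofMul (s' p))
  -- section property
  have hsec : ∀ e ∈ F2, ((Ψ (Multiplicative.toAdd (cmPhi d0 e))).toMul : FreeCMGroup d0) = e := by
    intro e he
    rw [hF2] at he
    induction he using Subgroup.closure_induction with
    | mem x hx =>
      obtain ⟨X, n, rfl⟩ := hx
      rw [hgen, cmPhi_gen]
      show ((Ψ (Finsupp.single ((QuotientGroup.mk X : G ⧸ cmN d0), n) 1)).toMul :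
        FreeCMGroup d0) = cmGen d0 X (Sum.inr n)
      rw [Finsupp.liftAddHom_apply_single, zmultiplesHom_apply, one_zsmul]
      exact hs'mk X n
    | one => simp
    | mul x y _ _ ihx ihy =>
      rw [map_mul, toAdd_mul, map_add, toMul_add, Subgroup.coe_mul, ihx, ihy]
    | inv x _ ihx =>
      rw [map_inv, toAdd_inv, map_neg, toMul_neg, Subgroup.coe_inv, ihx]
  -- F1 is killed by cmPhi
  have hker : ∀ e ∈ F1, cmPhi d0 e = 1 := by
    intro e he
    rw [hF1] at he
    induction he using Subgroup.closure_induction with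
    | mem x hx =>
      obtain ⟨X, m, rfl⟩ := hx
      rw [hgen, cmPhi_gen]
      rfl
    | one => exact map_one _
    | mul x y _ _ ihx ihy => rw [map_mul, ihx, ihy, mul_one]
    | inv x _ ihx => rw [map_inv, ihx, inv_one]
  -- (4) trivial intersection
  have hinf : F1 ⊓ F2 = ⊥ := by
    rw [eq_bot_iff]
    rintro e ⟨he1, he2⟩
    have h0 : cmPhi d0 e = 1 := hker e he1
    have h3 := hsec e he2
    rw [h0] at h3
    simp only [toAdd_one, map_zero, toMul_zero, OneMemClass.coe_one] at h3
    exact Subgroup.mem_bot.mpr h3.symm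
  -- (5) every element is a product
  have hcomm : ∀ f2 ∈ F2, ∀ g : FreeCMGroup d0, f2 * g = g * f2 := fun f2 h g =>
    ((Subgroup.mem_center_iff.mp (hcenter h)) g).symm
  let T : Subgroup (FreeCMGroup d0) :=
    { carrier := {e | ∃ f1 ∈ F1, ∃ f2 ∈ F2, e = f1 * f2}
      one_mem' := ⟨1, F1.one_mem, 1, F2.one_mem, by rw [mul_one]⟩
      mul_mem' := by
        rintro a b ⟨a1, ha1, a2, ha2, rfl⟩ ⟨b1, hb1, b2, hb2, rfl⟩
        refine ⟨a1 * b1, F1.mul_mem ha1 hb1, a2 * b2, F2.mul_mem ha2 hb2, ?_⟩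
        calc a1 * a2 * (b1 * b2) = a1 * (a2 * b1) * b2 := by group
          _ = a1 * (b1 * a2) * b2 := by rw [hcomm a2 ha2 b1]
          _ = a1 * b1 * (a2 * b2) := by group
      inv_mem' := by
        rintro a ⟨a1, ha1, a2, ha2, rfl⟩
        refine ⟨a1⁻¹, F1.inv_mem ha1, a2⁻¹, F2.inv_mem ha2, ?_⟩
        rw [mul_inv_rev, hcomm a2⁻¹ (F2.inv_mem ha2) a1⁻¹] }
  have hTtop : ∀ e : FreeCMGroup d0, e ∈ T := by
    intro e
    have he : e ∈ Subgroup.closure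
        (Set.range (PresentedGroup.of : G × (K1 ⊕ K2) → FreeCMGroup d0)) := by
      rw [PresentedGroup.closure_range_of]
      exact Subgroup.mem_top e
    induction he using Subgroup.closure_induction with
    | mem x hx =>
      obtain ⟨⟨X, m⟩, rfl⟩ := hx
      cases m with
      | inl m => exact ⟨cmGen d0 X (Sum.inl m), hm1 X m, 1, F2.one_mem, (mul_one _).symm⟩
      | inr n => exact ⟨1, F1.one_mem, cmGen d0 X (Sum.inr n), hm2 X n, (one_mul _).symm⟩
    | one => exact T.one_mem
    | mul x y _ _ ihx ihy => exact T.mul_mem ihx ihy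
    | inv x _ ihx => exact T.inv_mem ihx
  exact ⟨hcenter, hinv1, hinv2, hinf, hTtop⟩
end

section
/- Let G be a group, K₁ and K₂ sets, K = K₁ ⊕ K₂ their disjoint union, and ∂₀ : K → G a map with ∂₀(m) = 1 for every m ∈ K₂. Let ∂₀¹ : K₁ → G be the restriction of ∂₀ to K₁. Let (G, E, ∂, ▷) be the free crossed module on ∂₀ and (G, E¹, ∂¹, ▷¹) the free crossed module on ∂₀¹, and let F₁ be the subgroup of E generated by {X ▷ ⟦1,m⟧ : X ∈ G, m ∈ K₁}. Then the group homomorphism Φ : E¹ → E determined by Φ⟦X,m⟧ = ⟦X, m⟧ (viewing m ∈ K₁ inside K) is injective with image F₁, satisfies ∂ ∘ Φ = ∂¹, and is G-equivariant: Φ(X ▷¹ e) = X ▷ Φ(e) for all X ∈ G, e ∈ E¹. -/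
/-- Let `G` be a group, `K = K₁ ⊕ K₂`, and `d0 : K → G` a map with
`d0 m = 1` for every `m ∈ K₂`; let `d0¹ : K₁ → G` be the restriction of `d0` to `K₁`.  Let
`(G, E, δ, ρ)` be the free crossed module on `d0` and `(G, E¹, δ¹, ρ¹)` the free crossed
module on `d0¹`, and let `F₁ ≤ E` be the subgroup generated by `{ρ X ⟦1,m⟧ : X ∈ G, m ∈ K₁}`.
Then the group homomorphism `Φ : E¹ →* E` determined by `Φ ⟦X,m⟧ = ⟦X, inl m⟧` exists, is
injective with image `F₁`, satisfies `δ ∘ Φ = δ1`, and is `G`-equivariant. -/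
theorem freeCrossedModule_F1_free {G K1 K2 : Type*} [Group G]
    (d0 : K1 ⊕ K2 → G) (h2 : ∀ m : K2, d0 (Sum.inr m) = 1)
    (d01 : K1 → G) (hd01 : ∀ m : K1, d01 m = d0 (Sum.inl m))
    (δ : FreeCMGroup d0 →* G) (ρ : G →* MulAut (FreeCMGroup d0))
    (hδ : ∀ (X : G) (m : K1 ⊕ K2), δ (cmGen d0 X m) = X * d0 m * X⁻¹)
    (hρ : ∀ (X Y : G) (m : K1 ⊕ K2), ρ X (cmGen d0 Y m) = cmGen d0 (X * Y) m)
    (δ1 : FreeCMGroup d01 →* G) (ρ1 : G →* MulAut (FreeCMGroup d01))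
    (hδ1 : ∀ (X : G) (m : K1), δ1 (cmGen d01 X m) = X * d01 m * X⁻¹)
    (hρ1 : ∀ (X Y : G) (m : K1), ρ1 X (cmGen d01 Y m) = cmGen d01 (X * Y) m)
    (F1 : Subgroup (FreeCMGroup d0))
    (hF1 : F1 = Subgroup.closure
      {x | ∃ (X : G) (m : K1), x = ρ X (cmGen d0 1 (Sum.inl m))}) :
    (∃ Φ : FreeCMGroup d01 →* FreeCMGroup d0,
      ∀ (X : G) (m : K1), Φ (cmGen d01 X m) = cmGen d0 X (Sum.inl m)) ∧
    (∀ Φ : FreeCMGroup d01 →* FreeCMGroup d0,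
      (∀ (X : G) (m : K1), Φ (cmGen d01 X m) = cmGen d0 X (Sum.inl m)) →
      Function.Injective Φ ∧
      Φ.range = F1 ∧
      δ.comp Φ = δ1 ∧
      (∀ (X : G) (e : FreeCMGroup d01), Φ (ρ1 X e) = ρ X (Φ e))) := by
  -- the map Φ
  have hΦrel : ∀ r ∈ crossedRels d01,
      FreeGroup.lift (fun p : G × K1 => cmGen d0 p.1 (Sum.inl p.2)) r = 1 := by
    rintro r ⟨X, Y, m, n, rfl⟩
    simp only [map_mul, map_inv, FreeGroup.lift_apply_of, mul_inv_eq_one]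
    rw [cmGen_rel, hd01]
  refine ⟨⟨PresentedGroup.toGroup hΦrel, fun X m => PresentedGroup.toGroup.of hΦrel⟩, ?_⟩
  intro Φ hΦ
  -- the retraction Ψ
  have hΨrel : ∀ r ∈ crossedRels d0,
      FreeGroup.lift (fun p : G × (K1 ⊕ K2) =>
        Sum.elim (fun m => cmGen d01 p.1 m) (fun _ => (1 : FreeCMGroup d01)) p.2) r = 1 := by
    rintro r ⟨X, Y, m, n, rfl⟩
    simp only [map_mul, map_inv, FreeGroup.lift_apply_of]
    rcases m with m | m <;> rcases n with n | n
    · simp only [Sum.elim_inl, mul_inv_eq_one, ← hd01]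
      exact cmGen_rel d01 X Y m n
    · simp only [Sum.elim_inl, Sum.elim_inr, inv_one, mul_one, mul_inv_cancel]
    · simp only [Sum.elim_inl, Sum.elim_inr, one_mul, inv_one, mul_one, mul_inv_eq_one,
        h2, mul_inv_cancel]
    · simp only [Sum.elim_inr, one_mul, mul_one, inv_one]
  set Ψ : FreeCMGroup d0 →* FreeCMGroup d01 := PresentedGroup.toGroup hΨrel with hΨdef
  have hΨ : ∀ (X : G) (m : K1 ⊕ K2), Ψ (cmGen d0 X m) =
      Sum.elim (fun k => cmGen d01 X k) (fun _ => (1 : FreeCMGroup d01)) m :=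
    fun X m => PresentedGroup.toGroup.of hΨrel
  have hleft : Function.LeftInverse Ψ Φ := by
    have : Ψ.comp Φ = MonoidHom.id _ := by
      apply PresentedGroup.ext
      rintro ⟨X, m⟩
      have : Φ (PresentedGroup.of (X, m)) = cmGen d0 X (Sum.inl m) := hΦ X m
      simp only [MonoidHom.comp_apply, MonoidHom.id_apply, this, hΨ]
      rfl
    intro x
    exact DFunLike.congr_fun this x
  refine ⟨hleft.injective, ?_, ?_, ?_⟩
  · -- range
    rw [hF1]
    have hset : {x | ∃ (X : G) (m : K1), x = ρ X (cmGen d0 1 (Sum.inl m))} =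
        Φ '' Set.range (PresentedGroup.of (rels := crossedRels d01)) := by
      ext x
      constructor
      · rintro ⟨X, m, rfl⟩
        exact ⟨PresentedGroup.of (X, m), ⟨(X, m), rfl⟩, by
          rw [hρ, mul_one]; exact hΦ X m⟩
      · rintro ⟨_, ⟨⟨X, m⟩, rfl⟩, rfl⟩
        exact ⟨X, m, by rw [hρ, mul_one]; exact hΦ X m⟩
    rw [hset, ← MonoidHom.map_closure, PresentedGroup.closure_range_of,
      ← MonoidHom.range_eq_map]
  · -- δ ∘ Φ = δ1
    apply PresentedGroup.ext
    rintro ⟨X, m⟩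
    have h1 : Φ (PresentedGroup.of (X, m)) = cmGen d0 X (Sum.inl m) := hΦ X m
    simp only [MonoidHom.comp_apply, h1, hδ]
    rw [← hd01]
    exact (hδ1 X m).symm
  · -- equivariance
    intro X e
    have : Φ.comp (ρ1 X).toMonoidHom = (ρ X).toMonoidHom.comp Φ := by
      apply PresentedGroup.ext
      rintro ⟨Y, m⟩
      simp only [MonoidHom.comp_apply, MulEquiv.coe_toMonoidHom]
      have h1 : (PresentedGroup.of (Y, m) : FreeCMGroup d01) = cmGen d01 Y m := rfl
      rw [h1, hρ1, hΦ, hΦ, hρ]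
    exact DFunLike.congr_fun this e
end
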